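/- Let n_1 > n_0 > 0, let A_1 ∈ ℝ^{n_1×n_1}, and let P ∈ ℝ^{n_1×n_0} satisfy Pᵀ·P = (n_1/n_0)·I_{n_0}, with R = Pᵀ. Then the Galerkin operator A_0* = (n_0/n_1)²·R·A_1·P minimizes the Frobenius norm ‖A_1 − P·A_0·R‖_F over all A_0 ∈ ℝ^{n_0×n_0}; that is, for every A_0 ∈ ℝ^{n_0×n_0}, ‖A_1 − P·A_0*·R‖_F ≤ ‖A_1 − P·A_0·R‖_F. -/

import Mathlib

open Matrix

/-- The Frobenius norm of a real matrix, `‖M‖_F = (tr(Mᵀ·M))^{1/2}`. -/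
noncomputable def frobNorm {m n : ℕ} (M : Matrix (Fin m) (Fin n) ℝ) : ℝ :=
  Real.sqrt (Matrix.trace (Mᵀ * M))

/-- The Galerkin operator `A₀* = (n₀/n₁)²·R·A₁·P` (with `R = Pᵀ`) minimizes the
Frobenius norm `‖A₁ − P·A₀·R‖_F` over all `A₀ ∈ ℝ^{n₀×n₀}`, provided
`Pᵀ·P = (n₁/n₀)·I_{n₀}`. -/
theorem galerkin_optimal (n₀ n₁ : ℕ) (h₀ : 0 < n₀) (h₁ : n₀ < n₁)
    (A₁ : Matrix (Fin n₁) (Fin n₁) ℝ) (P : Matrix (Fin n₁) (Fin n₀) ℝ)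
    (hP : Pᵀ * P = ((n₁ : ℝ) / (n₀ : ℝ)) • (1 : Matrix (Fin n₀) (Fin n₀) ℝ))
    (A₀ : Matrix (Fin n₀) (Fin n₀) ℝ) :
    frobNorm (A₁ - P * (((n₀ : ℝ) / (n₁ : ℝ)) ^ 2 • (Pᵀ * A₁ * P)) * Pᵀ) ≤
      frobNorm (A₁ - P * A₀ * Pᵀ) := by
  have hn₀ : (0:ℝ) < n₀ := by exact_mod_cast h₀
  have hn₁ : (0:ℝ) < n₁ := by exact_mod_cast h₀.trans h₁
  set c : ℝ := (n₁:ℝ)/(n₀:ℝ) with hc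
  set s : ℝ := ((n₀:ℝ)/(n₁:ℝ))^2 with hs
  have hsc : s * c^2 = 1 := by rw [hs, hc]; field_simp
  set Astar : Matrix (Fin n₀) (Fin n₀) ℝ := s • (Pᵀ * A₁ * P) with hA
  set B := A₁ - P * Astar * Pᵀ with hB
  set D := Astar - A₀ with hD
  have hsplit : A₁ - P * A₀ * Pᵀ = B + P * D * Pᵀ := by
    rw [hB, hD, Matrix.mul_sub, Matrix.sub_mul]
    abel
  -- trace(Astarᵀ * D) in terms of trace(Pᵀ A₁ᵀ P D)
  have hAstarT : Astarᵀ = s • (Pᵀ * A₁ᵀ * P) := by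
    rw [hA]; simp [Matrix.transpose_smul, Matrix.transpose_mul, Matrix.mul_assoc]
  have ht1 : trace (Bᵀ * (P * D * Pᵀ)) = 0 := by
    have hBT : Bᵀ = A₁ᵀ - P * Astarᵀ * Pᵀ := by
      rw [hB]; simp [Matrix.transpose_sub, Matrix.transpose_mul, Matrix.mul_assoc]
    rw [hBT, Matrix.sub_mul, Matrix.trace_sub]
    have e1 : trace (A₁ᵀ * (P * D * Pᵀ)) = trace (Pᵀ * A₁ᵀ * P * D) := by
      rw [← Matrix.mul_assoc, ← Matrix.mul_assoc, Matrix.trace_mul_cycle]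
      simp only [Matrix.mul_assoc]
    have e2 : trace (P * Astarᵀ * Pᵀ * (P * D * Pᵀ)) = c^2 * trace (Astarᵀ * D) := by
      calc trace (P * Astarᵀ * Pᵀ * (P * D * Pᵀ))
          = trace (P * Astarᵀ * (Pᵀ * P) * (D * Pᵀ)) := by
            simp only [Matrix.mul_assoc]
        _ = c * trace (P * (Astarᵀ * D) * Pᵀ) := by
            rw [hP]; simp [Matrix.mul_smul, Matrix.smul_mul, Matrix.mul_assoc]
        _ = c * trace (Pᵀ * P * (Astarᵀ * D)) := by
            rw [Matrix.trace_mul_cycle, Matrix.mul_assoc]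
        _ = c^2 * trace (Astarᵀ * D) := by
            rw [hP]; simp [Matrix.smul_mul]; ring
    rw [e1, e2, hAstarT]
    simp only [Matrix.smul_mul, trace_smul, smul_eq_mul]
    linear_combination (-(Pᵀ * A₁ᵀ * P * D).trace) * hsc
  have htD : (0:ℝ) ≤ trace (Dᵀ * D) := by
    simp only [Matrix.trace, Matrix.diag, Matrix.mul_apply, Matrix.transpose_apply]
    apply Finset.sum_nonneg; intro i _
    apply Finset.sum_nonneg; intro j _
    exact mul_self_nonneg _
  have hC2 : trace ((P * D * Pᵀ)ᵀ * (P * D * Pᵀ)) = c^2 * trace (Dᵀ * D) := by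
    have hT : (P * D * Pᵀ)ᵀ = P * Dᵀ * Pᵀ := by
      simp [Matrix.transpose_mul, Matrix.mul_assoc]
    rw [hT]
    calc trace (P * Dᵀ * Pᵀ * (P * D * Pᵀ))
        = trace (P * Dᵀ * (Pᵀ * P) * (D * Pᵀ)) := by
          simp only [Matrix.mul_assoc]
      _ = c * trace (P * (Dᵀ * D) * Pᵀ) := by
          rw [hP]; simp [Matrix.mul_smul, Matrix.smul_mul, Matrix.mul_assoc]
      _ = c * trace (Pᵀ * P * (Dᵀ * D)) := by
          rw [Matrix.trace_mul_cycle, Matrix.mul_assoc]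
      _ = c^2 * trace (Dᵀ * D) := by
          rw [hP]; simp [Matrix.smul_mul]; ring
  have hcross2 : trace ((P * D * Pᵀ)ᵀ * B) = 0 := by
    have := congrArg trace (congrArg Matrix.transpose (rfl : Bᵀ * (P * D * Pᵀ) = Bᵀ * (P * D * Pᵀ)))
    calc trace ((P * D * Pᵀ)ᵀ * B) = trace ((Bᵀ * (P * D * Pᵀ))ᵀ) := by
          simp [Matrix.transpose_mul]
      _ = trace (Bᵀ * (P * D * Pᵀ)) := Matrix.trace_transpose _
      _ = 0 := ht1
  have key : trace ((A₁ - P * A₀ * Pᵀ)ᵀ * (A₁ - P * A₀ * Pᵀ))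
      = trace (Bᵀ * B) + c^2 * trace (Dᵀ * D) := by
    rw [hsplit, Matrix.transpose_add, Matrix.add_mul, Matrix.mul_add, Matrix.mul_add,
      Matrix.trace_add, Matrix.trace_add, Matrix.trace_add, ht1, hcross2, hC2]
    ring
  have hmain : trace (Bᵀ * B) ≤ trace ((A₁ - P * A₀ * Pᵀ)ᵀ * (A₁ - P * A₀ * Pᵀ)) := by
    rw [key]
    nlinarith [htD]
  unfold frobNorm
  exact Real.sqrt_le_sqrt hmain
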